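/- Let k ≥ 1 be an integer, m > 1, and suppose there are constants 0 < c₁ < c₂ with c₁ x^m ≤ f(x) ≤ c₂ x^m for all x in a neighborhood of [0,1], where f : [0,∞) → [0,∞) is continuous and strictly increasing with f(0)=0. Then for each M > 0 there exists a constant C > 0 such that ∫₀¹ r^{k-1}/(f(r)+t)^k dr ≤ C · [f⁻¹(t)]^k / t^k for all 0 < t < M. -/

import Mathlib

/-- the finite-type integral estimate
`∫₀¹ r^{k-1}/(f(r)+t)^k dr ≤ C·[f⁻¹(t)]^k / t^k` for `0 < t < M`. -/
theorem stmt_3 (f finv : ℝ → ℝ) (k : ℕ) (hk : 1 ≤ k)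
    (m c₁ c₂ : ℝ) (hm : 1 < m) (hc₁ : 0 < c₁) (hc₁₂ : c₁ < c₂)
    (ε : ℝ) (hε : 0 < ε)
    (hbound : ∀ x ∈ Set.Icc (0:ℝ) (1 + ε), c₁ * x ^ m ≤ f x ∧ f x ≤ c₂ * x ^ m)
    (hcont : ContinuousOn f (Set.Ici 0))
    (hmono : StrictMonoOn f (Set.Ici 0)) (hf0 : f 0 = 0)
    (hinv : ∀ t ≥ (0:ℝ), 0 ≤ finv t ∧ f (finv t) = t) :
    ∀ M > (0:ℝ), ∃ C > (0:ℝ), ∀ t : ℝ, 0 < t → t < M →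
      (∫ r in (0:ℝ)..1, r ^ (k - 1) / (f r + t) ^ k) ≤ C * (finv t) ^ k / t ^ k := by
  intro M hM
  have hc₂ : 0 < c₂ := hc₁.trans hc₁₂
  have hkR : (0:ℝ) < (k:ℝ) := by exact_mod_cast hk.trans_lt' (by norm_num)
  set q : ℝ := (k:ℝ) * (m - 1) with hq
  have hq0 : 0 < q := by
    have := sub_pos.mpr hm
    positivity
  refine ⟨1/(k:ℝ) + c₂^k / (c₁^k * q), by positivity, ?_⟩
  intro t ht htM
  set a := finv t with ha
  obtain ⟨ha0, hfa⟩ := hinv t ht.le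
  have hfnn : ∀ r : ℝ, 0 ≤ r → 0 ≤ f r := by
    intro r hr
    rcases eq_or_lt_of_le hr with h | h
    · rw [← h, hf0]
    · exact (hf0 ▸ hmono (le_refl (0:ℝ)) hr h).le
  have htk : (0:ℝ) < t ^ k := pow_pos ht k
  -- continuity/integrability of the main integrand on [0,1]
  have hgcont : ContinuousOn (fun r : ℝ => r ^ (k - 1) / (f r + t) ^ k) (Set.Icc 0 1) := by
    apply ContinuousOn.div
    · exact (continuous_pow (k-1)).continuousOn
    · exact ((hcont.mono (fun x hx => hx.1)).add continuousOn_const).pow k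
    · intro r hr
      have : 0 < f r + t := by
        have := hfnn r hr.1
        linarith
      positivity
  have hgint : IntervalIntegrable (fun r : ℝ => r ^ (k - 1) / (f r + t) ^ k)
      MeasureTheory.volume 0 1 := by
    exact ContinuousOn.intervalIntegrable
      (by rwa [Set.uIcc_of_le (by norm_num : (0:ℝ) ≤ 1)])
  have hapos : 0 < a := by
    rcases eq_or_lt_of_le ha0 with h | h
    · exfalso; rw [← h, hf0] at hfa; linarith
    · exact h
  by_cases h1a : 1 ≤ a
  · -- easy case: finv t ≥ 1
    have step1 : (∫ r in (0:ℝ)..1, r ^ (k - 1) / (f r + t) ^ k)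
        ≤ ∫ r in (0:ℝ)..1, r ^ (k - 1) / t ^ k := by
      apply intervalIntegral.integral_mono_on (by norm_num) hgint
      · exact (Continuous.intervalIntegrable (by continuity) 0 1)
      · intro r hr
        apply div_le_div_of_nonneg_left (pow_nonneg hr.1 _) htk
        apply pow_le_pow_left₀ ht.le
        have := hfnn r hr.1
        linarith
    have step2 : (∫ r in (0:ℝ)..1, r ^ (k - 1) / t ^ k) = 1/((k:ℝ) * t ^ k) := by
      rw [intervalIntegral.integral_div, integral_pow]
      rw [Nat.sub_add_cancel hk]
      simp
      field_simp
      rw [zero_pow (by omega : k ≠ 0), Nat.cast_sub hk]; ring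
    have hak : (1:ℝ) ≤ a ^ k := one_le_pow₀ h1a
    calc (∫ r in (0:ℝ)..1, r ^ (k - 1) / (f r + t) ^ k)
        ≤ 1/((k:ℝ) * t ^ k) := step2 ▸ step1
      _ = (1/(k:ℝ)) * 1 / t ^ k := by ring
      _ ≤ (1/(k:ℝ)) * a ^ k / t ^ k := by gcongr
      _ ≤ (1/(k:ℝ) + c₂^k / (c₁^k * q)) * a ^ k / t ^ k := by
          have hD : (0:ℝ) ≤ c₂^k/(c₁^k*q) := by positivity
          have h' : (1/(k:ℝ)) * a^k ≤ (1/(k:ℝ) + c₂^k/(c₁^k*q)) * a^k :=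
            mul_le_mul_of_nonneg_right (by linarith) (pow_nonneg ha0 k)
          exact (div_le_div_iff_of_pos_right htk).mpr h'
  · push_neg at h1a
    have haε : a ∈ Set.Icc (0:ℝ) (1+ε) := ⟨ha0, by linarith⟩
    have htle : t ≤ c₂ * a ^ m := hfa ▸ (hbound a haε).2
    have ham : 0 < a ^ m := Real.rpow_pos_of_pos hapos m
    set p : ℝ := (k:ℝ) - 1 - m * k with hp
    have hp1 : p + 1 = -q := by rw [hp, hq]; push_cast; ring
    have hqneg : p + 1 < 0 := by rw [hp1]; linarith
    -- integrability on subintervals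
    have hint1 : IntervalIntegrable (fun r : ℝ => r ^ (k - 1) / (f r + t) ^ k)
        MeasureTheory.volume 0 a := by
      apply hgint.mono_set
      rw [Set.uIcc_of_le ha0, Set.uIcc_of_le (by norm_num : (0:ℝ) ≤ 1)]
      exact Set.Icc_subset_Icc le_rfl h1a.le
    have hint2 : IntervalIntegrable (fun r : ℝ => r ^ (k - 1) / (f r + t) ^ k)
        MeasureTheory.volume a 1 := by
      apply hgint.mono_set
      rw [Set.uIcc_of_le h1a.le, Set.uIcc_of_le (by norm_num : (0:ℝ) ≤ 1)]
      exact Set.Icc_subset_Icc ha0 le_rfl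
    have hsplit : (∫ r in (0:ℝ)..1, r ^ (k - 1) / (f r + t) ^ k)
        = (∫ r in (0:ℝ)..a, r ^ (k - 1) / (f r + t) ^ k)
          + (∫ r in a..1, r ^ (k - 1) / (f r + t) ^ k) :=
      (intervalIntegral.integral_add_adjacent_intervals hint1 hint2).symm
    -- first piece
    have hpow : (∫ r in (0:ℝ)..a, (r:ℝ) ^ (k-1)) = a ^ k / k := by
      rw [integral_pow, Nat.sub_add_cancel hk, zero_pow (by omega : k ≠ 0), sub_zero]
      norm_num [Nat.cast_sub hk]
    have hb1 : (∫ r in (0:ℝ)..a, r ^ (k - 1) / (f r + t) ^ k) ≤ a ^ k/((k:ℝ) * t ^ k) := by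
      have step : (∫ r in (0:ℝ)..a, r ^ (k - 1) / (f r + t) ^ k)
          ≤ ∫ r in (0:ℝ)..a, r ^ (k-1) / t ^ k := by
        apply intervalIntegral.integral_mono_on ha0 hint1
          (Continuous.intervalIntegrable (by continuity) 0 a)
        intro r hr
        apply div_le_div_of_nonneg_left (pow_nonneg hr.1 _) htk
        apply pow_le_pow_left₀ ht.le
        have := hfnn r hr.1
        linarith
      refine step.trans_eq ?_
      rw [intervalIntegral.integral_div, hpow]
      field_simp
    -- second piece
    have hpcont : ContinuousOn (fun r : ℝ => r ^ p / c₁^k) (Set.Icc a 1) := by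
      apply ContinuousOn.div_const
      intro x hx
      exact (Real.continuousAt_rpow_const x p
        (Or.inl (ne_of_gt (lt_of_lt_of_le hapos hx.1)))).continuousWithinAt
    have hpint : IntervalIntegrable (fun r : ℝ => r ^ p / c₁^k) MeasureTheory.volume a 1 :=
      ContinuousOn.intervalIntegrable (by rwa [Set.uIcc_of_le h1a.le])
    have hmainle : (∫ r in a..1, r ^ (k - 1) / (f r + t) ^ k)
        ≤ ∫ r in a..1, r ^ p / c₁^k := by
      apply intervalIntegral.integral_mono_on h1a.le hint2 hpint
      intro r hr
      have hr0 : 0 < r := lt_of_lt_of_le hapos hr.1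
      have hrm : 0 < r ^ m := Real.rpow_pos_of_pos hr0 m
      have hfr : c₁ * r ^ m ≤ f r := (hbound r ⟨hr0.le, by linarith [hr.2]⟩).1
      have hden : (0:ℝ) < c₁ * r ^ m := by positivity
      have step : r ^ (k-1)/(f r + t) ^ k ≤ r ^ (k-1)/(c₁ * r ^ m) ^ k := by
        apply div_le_div_of_nonneg_left (pow_nonneg hr0.le _) (pow_pos hden k)
        exact pow_le_pow_left₀ hden.le (by linarith) k
      refine step.trans_eq ?_
      rw [mul_pow]
      have e1 : (r:ℝ) ^ (k-1) = r ^ ((k:ℝ)-1) := by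
        rw [← Real.rpow_natCast r (k-1)]
        norm_num [Nat.cast_sub hk]
      have e2 : (r ^ m) ^ k = r ^ (m*(k:ℝ)) := by
        rw [← Real.rpow_natCast (r ^ m) k, ← Real.rpow_mul hr0.le]
      have e3 : r ^ p = r ^ ((k:ℝ)-1) / r ^ (m*(k:ℝ)) := by
        rw [← Real.rpow_sub hr0]
      rw [e1, e2, e3, div_div, mul_comm (c₁ ^ k)]
    have hcalc : (∫ r in a..1, r ^ p / c₁^k) = ((1:ℝ) - a ^ (p+1))/(p+1) / c₁^k := by
      rw [intervalIntegral.integral_div, integral_rpow, Real.one_rpow]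
      right
      constructor
      · intro h; rw [h] at hqneg; norm_num at hqneg
      · rw [Set.uIcc_of_le h1a.le, Set.mem_Icc]
        push_neg
        intro h; linarith
    have hap : a ^ (p+1) ≤ a ^ k * c₂ ^ k / t ^ k := by
      have e : a ^ (p+1) = a ^ k / (a ^ m) ^ k := by
        rw [← Real.rpow_natCast a k, ← Real.rpow_natCast (a ^ m) k,
          ← Real.rpow_mul ha0, ← Real.rpow_sub hapos]
        congr 1
        rw [hp]; ring
      rw [e]
      have htc : t/c₂ ≤ a ^ m := by rw [div_le_iff₀ hc₂]; linarith
      have h2 : (t/c₂) ^ k ≤ (a ^ m) ^ k := pow_le_pow_left₀ (by positivity) htc k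
      calc a ^ k/(a ^ m) ^ k ≤ a ^ k/((t/c₂) ^ k) :=
            div_le_div_of_nonneg_left (pow_nonneg ha0 k) (pow_pos (by positivity) k) h2
        _ = a ^ k * c₂ ^ k/t ^ k := by rw [div_pow]; field_simp
    have hb2 : (∫ r in a..1, r ^ (k - 1) / (f r + t) ^ k)
        ≤ (a ^ k * c₂ ^ k / t ^ k) / (c₁ ^ k * q) := by
      refine hmainle.trans ?_
      rw [hcalc]
      have e4 : ((1:ℝ) - a ^ (p+1))/(p+1) = (a ^ (p+1) - 1)/q := by
        generalize a ^ (p+1) = A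
        rw [hp1, div_neg, ← neg_div]
        congr 1
        ring
      rw [e4]
      have h5 : (a ^ (p+1) - 1)/q ≤ (a ^ k * c₂ ^ k / t ^ k)/q := by
        gcongr
        linarith
      calc (a ^ (p+1) - 1)/q / c₁ ^ k ≤ (a ^ k * c₂ ^ k / t ^ k)/q / c₁ ^ k := by
            gcongr
        _ = (a ^ k * c₂ ^ k / t ^ k) / (c₁ ^ k * q) := by
            rw [div_div, mul_comm q]
    rw [hsplit]
    have final : a ^ k/((k:ℝ) * t ^ k) + (a ^ k * c₂ ^ k/t ^ k)/(c₁ ^ k * q)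
        = (1/(k:ℝ) + c₂ ^ k/(c₁ ^ k * q)) * a ^ k/t ^ k := by
      field_simp
    linarith [hb1, hb2]
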